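/- For every Hessenberg function h, the generalized Tanisaki ideal I_h equals the Hessenberg basis ideal J_h: ⟨ e_{h_i - r}(x_1,...,x_{h_i}) : 1 ≤ i ≤ n, 0 ≤ r ≤ i-1 ⟩ = ⟨ ẽ_{β_i}(x_i,...,x_n) : 1 ≤ i ≤ n ⟩, where β_i = i - #{k : h_k < i}. -/

import Mathlib

open MvPolynomial

/-- The index set of variables `x_a, x_{a+1}, ..., x_b` (1-indexed) among `x_1, ..., x_n`. -/
def seg (n a b : ℕ) : Finset (Fin n) :=
  Finset.univ.filter fun i => a ≤ (i : ℕ) + 1 ∧ (i : ℕ) + 1 ≤ b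

/-- Truncated elementary symmetric polynomial of degree `d` in the variables indexed by `S`. -/
noncomputable def ee (n : ℕ) (d : ℤ) (S : Finset (Fin n)) : MvPolynomial (Fin n) ℤ :=
  if 0 ≤ d then ∑ A ∈ S.powersetCard d.toNat, ∏ i ∈ A, X i else 0

/-- Truncated complete homogeneous symmetric polynomial of degree `d` in variables indexed by `S`. -/
noncomputable def te (n : ℕ) (d : ℤ) (S : Finset (Fin n)) : MvPolynomial (Fin n) ℤ :=
  if 0 ≤ d then ∑ m ∈ S.sym d.toNat, ((m : Multiset (Fin n)).map X).prod else 0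

variable {n : ℕ}

noncomputable def Ee (d : ℕ) (S : Finset (Fin n)) : MvPolynomial (Fin n) ℤ :=
  ∑ A ∈ S.powersetCard d, ∏ i ∈ A, X i

noncomputable def He (d : ℕ) (S : Finset (Fin n)) : MvPolynomial (Fin n) ℤ :=
  ∑ m ∈ S.sym d, ((m : Multiset (Fin n)).map X).prod

lemma ee_coe (d : ℕ) (S : Finset (Fin n)) : ee n (d : ℤ) S = Ee d S := by
  simp [ee, Ee]

lemma te_coe (d : ℕ) (S : Finset (Fin n)) : te n (d : ℤ) S = He d S := by
  simp [te, He]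

@[simp] lemma Ee_zero (S : Finset (Fin n)) : Ee 0 S = 1 := by
  simp [Ee]

@[simp] lemma He_zero (S : Finset (Fin n)) : He 0 S = 1 := by
  have : ((∅ : Sym (Fin n) 0) : Multiset (Fin n)) = 0 := rfl
  simp [He, this]

lemma Ee_of_card_lt {d : ℕ} {S : Finset (Fin n)} (hd : S.card < d) : Ee d S = 0 := by
  rw [Ee, Finset.powersetCard_eq_empty.2 hd, Finset.sum_empty]

lemma Ee_empty {d : ℕ} (hd : 1 ≤ d) : Ee d (∅ : Finset (Fin n)) = 0 :=
  Ee_of_card_lt (by simp; omega)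

lemma He_empty {d : ℕ} (hd : 1 ≤ d) : He d (∅ : Finset (Fin n)) = 0 := by
  cases d with
  | zero => omega
  | succ e => rw [He, Finset.sym_empty, Finset.sum_empty]

lemma Ee_insert {x : Fin n} {S : Finset (Fin n)} (hx : x ∉ S) (d : ℕ) :
    Ee (d + 1) (insert x S) = Ee (d + 1) S + X x * Ee d S := by
  have hxA : ∀ A ∈ S.powersetCard d, x ∉ A := fun A hA hxA =>
    hx ((Finset.mem_powersetCard.1 hA).1 hxA)
  have hdisj : Disjoint (S.powersetCard (d+1)) ((S.powersetCard d).image (insert x)) := by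
    rw [Finset.disjoint_right]
    rintro A hA hA'
    obtain ⟨B, hB, rfl⟩ := Finset.mem_image.1 hA
    exact hx ((Finset.mem_powersetCard.1 hA').1 (Finset.mem_insert_self x B))
  have hinj : ∀ A ∈ S.powersetCard d, ∀ B ∈ S.powersetCard d,
      insert x A = insert x B → A = B := by
    intro A hA B hB hAB
    rw [← Finset.erase_insert (hxA A hA), hAB, Finset.erase_insert (hxA B hB)]
  rw [Ee, Finset.powersetCard_succ_insert hx, Finset.sum_union hdisj, Finset.sum_image hinj]
  rw [Ee, Ee, Finset.mul_sum]
  congr 1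
  exact Finset.sum_congr rfl fun A hA => Finset.prod_insert (hxA A hA)

lemma He_insert {x : Fin n} {S : Finset (Fin n)} (hx : x ∉ S) (d : ℕ) :
    He (d + 1) (insert x S) = He (d + 1) S + X x * He d (insert x S) := by
  classical
  rw [He, ← Finset.sum_filter_add_sum_filter_not ((insert x S).sym (d+1)) (fun m => x ∈ m)]
  have h2 : ((insert x S).sym (d+1)).filter (fun m => x ∉ m) = S.sym (d+1) := by
    ext m
    simp only [Finset.mem_filter, Finset.mem_sym_iff, Finset.mem_insert]
    constructor
    · rintro ⟨hm, hxm⟩ a ha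
      rcases hm a ha with rfl | h
      · exact absurd ha hxm
      · exact h
    · intro hm
      exact ⟨fun a ha => Or.inr (hm a ha), fun hxm => hx (hm x hxm)⟩
  have h1 : ∑ m ∈ ((insert x S).sym (d+1)).filter (fun m => x ∈ m),
      ((m : Multiset (Fin n)).map X).prod
      = X x * He d (insert x S) := by
    rw [He, Finset.mul_sum]
    refine Finset.sum_bij' (fun m hm => Sym.erase m x (Finset.mem_filter.1 hm).2)
      (fun m _ => Sym.cons x m) ?_ ?_ ?_ ?_ ?_
    · intro m hm
      rw [Finset.mem_sym_iff]
      intro a ha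
      have := Finset.mem_sym_iff.1 (Finset.mem_filter.1 hm).1
      exact this a (Multiset.mem_of_mem_erase ha)
    · intro m hm
      rw [Finset.mem_filter]
      refine ⟨Finset.mem_sym_iff.2 fun a ha => ?_, Sym.mem_cons_self x m⟩
      rcases Sym.mem_cons.1 ha with rfl | h
      · exact Finset.mem_insert_self _ _
      · exact Finset.mem_sym_iff.1 hm a h
    · intro m hm
      exact Sym.cons_erase (Finset.mem_filter.1 hm).2
    · intro m hm
      exact Sym.erase_cons_head m x
    · intro m hm
      have : (m : Multiset (Fin n)) = x ::ₘ (Sym.erase m x (Finset.mem_filter.1 hm).2 : Multiset (Fin n)) := by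
        conv_lhs => rw [← Sym.cons_erase (Finset.mem_filter.1 hm).2]
        rfl
      rw [this, Multiset.map_cons, Multiset.prod_cons]
  rw [h1, h2, add_comm]
  rfl

lemma star1 (d : ℕ) (T S : Finset (Fin n)) (hTS : T ⊆ S) :
    ∑ k ∈ Finset.range (d+1), (-1 : MvPolynomial (Fin n) ℤ)^k * Ee k T * He (d-k) S
      = He d (S \ T) := by
  classical
  revert hTS
  induction T using Finset.induction_on generalizing d with
  | empty =>
    intro _
    rw [Finset.sdiff_empty,
      Finset.sum_eq_single_of_mem 0 (Finset.mem_range.2 (Nat.succ_pos d))]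
    · simp
    · intro k _ hk0
      rw [Ee_empty (Nat.one_le_iff_ne_zero.2 hk0)]
      ring
  | @insert x T hxT ih =>
    intro hTS
    have hTS' : T ⊆ S := (Finset.subset_insert x T).trans hTS
    have hxS : x ∈ S := hTS (Finset.mem_insert_self x T)
    have hxD : x ∉ S \ insert x T := fun hc => (Finset.mem_sdiff.1 hc).2 (Finset.mem_insert_self x T)
    have hrw : S \ T = insert x (S \ insert x T) := by
      ext a
      simp only [Finset.mem_sdiff, Finset.mem_insert]
      by_cases hax : a = x
      · subst hax; tauto
      · tauto
    cases d with
    | zero => simp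
    | succ e =>
      rw [Finset.sum_range_succ']
      have key : ∀ k ∈ Finset.range (e+1),
          (-1 : MvPolynomial (Fin n) ℤ)^(k+1) * Ee (k+1) (insert x T) * He (e+1-(k+1)) S
            = (-1)^(k+1) * Ee (k+1) T * He (e+1-(k+1)) S
              + (- X x) * ((-1)^k * Ee k T * He (e-k) S) := by
        intro k _
        rw [Ee_insert hxT k, Nat.succ_sub_succ, pow_succ]
        ring
      rw [Finset.sum_congr rfl key, Finset.sum_add_distrib, ← Finset.mul_sum, ih e hTS']
      have hA := ih (e+1) hTS'
      rw [Finset.sum_range_succ'] at hA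
      have hB : He (e+1) (S \ T) = He (e+1) (S \ insert x T) + X x * He e (S \ T) := by
        conv_lhs => rw [hrw]
        rw [He_insert hxD e, ← hrw]
      simp only [Ee_zero, Nat.sub_zero, pow_zero, one_mul] at hA ⊢
      linear_combination hA + hB

lemma star2 (d : ℕ) (U S : Finset (Fin n)) (hUS : U ⊆ S) :
    ∑ k ∈ Finset.range (d+1), (-1 : MvPolynomial (Fin n) ℤ)^k * Ee k S * He (d-k) U
      = (-1)^d * Ee d (S \ U) := by
  classical
  revert hUS
  induction U using Finset.induction_on generalizing d with
  | empty =>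
    intro _
    rw [Finset.sdiff_empty,
      Finset.sum_eq_single_of_mem d (Finset.mem_range.2 (Nat.lt_succ_self d))]
    · simp
    · intro k hk hkd
      have h1 : 1 ≤ d - k := by
        have := Finset.mem_range.1 hk; omega
      rw [He_empty h1]
      ring
  | @insert x U hxU ih =>
    intro hUS
    have hUS' : U ⊆ S := (Finset.subset_insert x U).trans hUS
    have hxS : x ∈ S := hUS (Finset.mem_insert_self x U)
    have hxD : x ∉ S \ insert x U := fun hc => (Finset.mem_sdiff.1 hc).2 (Finset.mem_insert_self x U)
    have hrw : S \ U = insert x (S \ insert x U) := by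
      ext a
      simp only [Finset.mem_sdiff, Finset.mem_insert]
      by_cases hax : a = x
      · subst hax; tauto
      · tauto
    induction d with
    | zero => simp
    | succ e ihd =>
      rw [Finset.sum_range_succ]
      have key : ∀ k ∈ Finset.range (e+1),
          (-1 : MvPolynomial (Fin n) ℤ)^k * Ee k S * He (e+1-k) (insert x U)
            = (-1)^k * Ee k S * He (e+1-k) U
              + X x * ((-1)^k * Ee k S * He (e-k) (insert x U)) := by
        intro k hk
        have hk' : k ≤ e := by have := Finset.mem_range.1 hk; omega
        have hsub : e + 1 - k = (e - k) + 1 := by omega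
        rw [hsub, He_insert hxU (e-k)]
        ring
      rw [Finset.sum_congr rfl key, Finset.sum_add_distrib, ← Finset.mul_sum, ihd]
      have last : (-1 : MvPolynomial (Fin n) ℤ)^(e+1) * Ee (e+1) S * He (e+1-(e+1)) (insert x U)
          = (-1)^(e+1) * Ee (e+1) S * He (e+1-(e+1)) U := by
        rw [Nat.sub_self]
        simp
      rw [last]
      have hA := ih (e+1) hUS'
      rw [Finset.sum_range_succ] at hA
      have hB : Ee (e+1) (S \ U) = Ee (e+1) (S \ insert x U) + X x * Ee e (S \ insert x U) := by
        conv_lhs => rw [hrw]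
        exact Ee_insert hxD e
      linear_combination hA + (-1 : MvPolynomial (Fin n) ℤ)^(e+1) * hB

lemma seg_one_n : seg n 1 n = (Finset.univ : Finset (Fin n)) := by
  ext i
  have := i.isLt
  simp only [seg, Finset.mem_filter, Finset.mem_univ, true_and, iff_true]
  omega

lemma seg_zero : seg n 1 0 = (∅ : Finset (Fin n)) := by
  ext i
  simp [seg]

lemma seg_empty_left {a : ℕ} (ha : n < a) : seg n a n = (∅ : Finset (Fin n)) := by
  ext i
  have := i.isLt
  simp only [seg, Finset.mem_filter, Finset.mem_univ, true_and, Finset.notMem_empty, iff_false]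
  omega

lemma sdiff_seg (m : ℕ) : (Finset.univ : Finset (Fin n)) \ seg n 1 m = seg n (m+1) n := by
  ext i
  have := i.isLt
  simp only [Finset.mem_sdiff, Finset.mem_univ, true_and, seg, Finset.mem_filter, not_and]
  omega

lemma sdiff_seg' (m : ℕ) : (Finset.univ : Finset (Fin n)) \ seg n (m+1) n = seg n 1 m := by
  ext i
  have := i.isLt
  simp only [Finset.mem_sdiff, Finset.mem_univ, true_and, seg, Finset.mem_filter, not_and]
  omega

lemma seg_succ_right {m : ℕ} (hm : m < n) :
    seg n 1 (m+1) = insert (⟨m, hm⟩ : Fin n) (seg n 1 m) := by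
  ext i
  simp only [seg, Finset.mem_insert, Finset.mem_filter, Finset.mem_univ, true_and, Fin.ext_iff]
  omega

lemma not_mem_seg_right {m : ℕ} (hm : m < n) : (⟨m, hm⟩ : Fin n) ∉ seg n 1 m := by
  simp [seg]

lemma seg_left_insert (j : Fin n) :
    seg n ((j : ℕ)+1) n = insert j (seg n ((j : ℕ)+2) n) := by
  ext i
  have := i.isLt
  simp only [seg, Finset.mem_insert, Finset.mem_filter, Finset.mem_univ, true_and, Fin.ext_iff]
  omega

lemma not_mem_seg_left (j : Fin n) : j ∉ seg n ((j : ℕ)+2) n := by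
  simp [seg]

lemma card_seg {m : ℕ} (hm : m ≤ n) : (seg n 1 m).card = m := by
  induction m with
  | zero => rw [seg_zero]; rfl
  | succ m ih =>
    have hmn : m < n := by omega
    rw [seg_succ_right hmn, Finset.card_insert_of_notMem (not_mem_seg_right hmn),
      ih (by omega)]

lemma card_filter_le_val (j : Fin n) :
    (Finset.univ.filter fun k : Fin n => (k : ℕ) ≤ (j : ℕ)).card = (j : ℕ) + 1 := by
  have : (Finset.univ.filter fun k : Fin n => (k : ℕ) ≤ (j : ℕ)) = seg n 1 ((j : ℕ)+1) := by
    ext i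
    simp only [seg, Finset.mem_filter, Finset.mem_univ, true_and]
    omega
  rw [this, card_seg (by have := j.isLt; omega)]

lemma card_filter_lt_val (m : ℕ) :
    (Finset.univ.filter fun k : Fin n => (k : ℕ) < m).card ≤ m := by
  have : (Finset.univ.filter fun k : Fin n => (k : ℕ) < m) = seg n 1 (min m n) := by
    ext i
    have := i.isLt
    simp only [seg, Finset.mem_filter, Finset.mem_univ, true_and]
    omega
  rw [this, card_seg (min_le_right m n)]
  exact min_le_left m n

lemma neg_pow_mem (K : Ideal (MvPolynomial (Fin n) ℤ)) (d : ℕ)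
    (z : MvPolynomial (Fin n) ℤ) (hz : (-1 : MvPolynomial (Fin n) ℤ)^d * z ∈ K) : z ∈ K := by
  rcases Nat.even_or_odd d with hd | hd
  · rwa [hd.neg_one_pow, one_mul] at hz
  · rw [hd.neg_one_pow, neg_one_mul] at hz
    exact (neg_mem_iff).1 hz

theorem stmt18 (n : ℕ) (hn : 0 < n) (h : Fin n → ℕ)
    (hh1 : ∀ i : Fin n, (i : ℕ) + 1 ≤ h i ∧ h i ≤ n)
    (hh2 : ∀ i j : Fin n, i ≤ j → h i ≤ h j)
    (β : Fin n → ℕ)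
    (hβ : ∀ i : Fin n,
      β i = (i : ℕ) + 1 - (Finset.univ.filter fun k : Fin n => h k < (i : ℕ) + 1).card) :
    Ideal.span {p : MvPolynomial (Fin n) ℤ |
        ∃ i : Fin n, ∃ r : ℕ, r ≤ (i : ℕ) ∧ p = ee n ((h i : ℤ) - r) (seg n 1 (h i))} =
      Ideal.span (Set.range fun j : Fin n => te n (β j) (seg n ((j : ℕ) + 1) n)) := by
  classical
  set I := Ideal.span {p : MvPolynomial (Fin n) ℤ |
      ∃ i : Fin n, ∃ r : ℕ, r ≤ (i : ℕ) ∧ p = ee n ((h i : ℤ) - r) (seg n 1 (h i))} with hI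
  set J := Ideal.span (Set.range fun j : Fin n => te n (β j) (seg n ((j : ℕ) + 1) n)) with hJ
  set c : ℕ → ℕ := fun m => (Finset.univ.filter fun k : Fin n => h k ≤ m).card with hc
  have hβc : ∀ i : Fin n, β i = (i : ℕ) + 1 - c (i : ℕ) := by
    intro i
    rw [hβ i, hc]
    congr 2
    ext k
    simp [Nat.lt_succ_iff]
  have hcmono : ∀ a b : ℕ, a ≤ b → c a ≤ c b := by
    intro a b hab
    refine Finset.card_le_card ?_
    intro k hk
    simp only [Finset.mem_filter, Finset.mem_univ, true_and] at hk ⊢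
    omega
  have hcle : ∀ m, c m ≤ m := by
    intro m
    calc c m ≤ (Finset.univ.filter fun k : Fin n => (k : ℕ) < m).card := by
          refine Finset.card_le_card ?_
          intro k hk
          have := (hh1 k).1
          simp only [Finset.mem_filter, Finset.mem_univ, true_and] at hk ⊢
          omega
      _ ≤ m := card_filter_lt_val m
  have hcge : ∀ i : Fin n, (i : ℕ) + 1 ≤ c (h i) := by
    intro i
    calc (i : ℕ) + 1 = (Finset.univ.filter fun k : Fin n => (k : ℕ) ≤ (i : ℕ)).card :=
          (card_filter_le_val i).symm
      _ ≤ c (h i) := Finset.card_le_card (by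
          intro k hk
          simp only [Finset.mem_filter, Finset.mem_univ, true_and] at hk ⊢
          exact hh2 k i (by exact Fin.le_def.2 hk))
  have memIgen : ∀ (i : Fin n) (r : ℕ), r ≤ (i : ℕ) → Ee (h i - r) (seg n 1 (h i)) ∈ I := by
    intro i r hr
    apply Ideal.subset_span
    refine ⟨i, r, hr, ?_⟩
    have h1 : ((h i : ℤ) - r) = ((h i - r : ℕ) : ℤ) := by
      have := (hh1 i).1
      omega
    rw [h1, ee_coe]
  have memJgen : ∀ j : Fin n, He (β j) (seg n ((j : ℕ) + 1) n) ∈ J := by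
    intro j
    apply Ideal.subset_span
    exact ⟨j, te_coe _ _⟩
  have hEfullI : ∀ d, 1 ≤ d → Ee d (Finset.univ : Finset (Fin n)) ∈ I := by
    intro d hd
    by_cases hdn : d ≤ n
    · have hlast : n - 1 < n := by omega
      have hhi : h ⟨n-1, hlast⟩ = n := by
        have h1 := (hh1 ⟨n-1, hlast⟩).1
        have h2 := (hh1 ⟨n-1, hlast⟩).2
        simp only at h1 h2
        omega
      have hmem := memIgen ⟨n-1, hlast⟩ (n - d) (by simp; omega)
      rw [hhi, seg_one_n, show n - (n - d) = d by omega] at hmem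
      exact hmem
    · rw [Ee_of_card_lt (by rw [Finset.card_univ, Fintype.card_fin]; omega)]
      exact Submodule.zero_mem _
  have hL1 : ∀ t : ℕ, ∀ j : Fin n, n - (j : ℕ) ≤ t → ∀ d, β j ≤ d →
      He d (seg n ((j : ℕ) + 1) n) ∈ J := by
    intro t
    induction t with
    | zero =>
      intro j hj
      exact absurd hj (by have := j.isLt; omega)
    | succ t iht =>
      intro j hj d hd
      induction d, hd using Nat.le_induction with
      | base => exact memJgen j
      | succ d hd ihd =>
        have hins := seg_left_insert j
        rw [hins, He_insert (not_mem_seg_left j) d, ← hins]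
        have hfirst : He (d+1) (seg n ((j : ℕ) + 2) n) ∈ J := by
          by_cases hjn : (j : ℕ) + 1 < n
          · have := iht ⟨(j : ℕ) + 1, hjn⟩ (by simp; omega) (d+1) ?_
            · simpa using this
            · have e1 := hβc ⟨(j : ℕ) + 1, hjn⟩
              have e2 := hβc j
              simp only at e1
              have := hcmono (j : ℕ) ((j : ℕ) + 1) (by omega)
              have := hcle (j : ℕ)
              omega
          · rw [seg_empty_left (by omega), He_empty (by omega)]
            exact Submodule.zero_mem _
        exact add_mem hfirst (Ideal.mul_mem_left _ _ ihd)
  have hc0 : c 0 = 0 := by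
    rw [hc]
    simp only [Finset.card_eq_zero]
    rw [Finset.filter_eq_empty_iff]
    intro k _
    have := (hh1 k).1
    omega
  have hHunivJ : ∀ d, 1 ≤ d → He d (Finset.univ : Finset (Fin n)) ∈ J := by
    intro d hd
    have hb0 : β ⟨0, hn⟩ ≤ d := by
      rw [hβc]
      simp only [hc0]
      omega
    have := hL1 n ⟨0, hn⟩ (by simp) d hb0
    rw [show ((⟨0, hn⟩ : Fin n) : ℕ) + 1 = 1 from rfl, seg_one_n] at this
    exact this
  have hEunivJ : ∀ d, 1 ≤ d → Ee d (Finset.univ : Finset (Fin n)) ∈ J := by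
    intro d hd
    have hstar := star1 (n := n) d Finset.univ Finset.univ subset_rfl
    rw [Finset.sdiff_self, He_empty hd, Finset.sum_range_succ, Nat.sub_self, He_zero,
      mul_one] at hstar
    apply neg_pow_mem J d
    have heq : (-1 : MvPolynomial (Fin n) ℤ)^d * Ee d Finset.univ
        = -∑ k ∈ Finset.range d,
            (-1 : MvPolynomial (Fin n) ℤ)^k * Ee k Finset.univ * He (d-k) Finset.univ := by
      linear_combination hstar
    rw [heq]
    exact neg_mem (Ideal.sum_mem _ fun k hk => Ideal.mul_mem_left _ _
      (hHunivJ (d-k) (by have := Finset.mem_range.1 hk; omega)))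
  have hHunivI : ∀ d, 1 ≤ d → He d (Finset.univ : Finset (Fin n)) ∈ I := by
    intro d hd
    have hstar := star1 (n := n) d Finset.univ Finset.univ subset_rfl
    rw [Finset.sdiff_self, He_empty hd, Finset.sum_range_succ'] at hstar
    simp only [pow_zero, Ee_zero, one_mul, Nat.sub_zero] at hstar
    have heq : He d (Finset.univ : Finset (Fin n))
        = -∑ k ∈ Finset.range d,
            (-1 : MvPolynomial (Fin n) ℤ)^(k+1) * Ee (k+1) Finset.univ
              * He (d-(k+1)) Finset.univ := by
      linear_combination hstar
    rw [heq]
    exact neg_mem (Ideal.sum_mem _ fun k hk => Ideal.mul_mem_right _ _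
      (Ideal.mul_mem_left _ _ (hEfullI (k+1) (Nat.succ_le_succ (Nat.zero_le k)))))
  have hL3 : ∀ m, m ≤ n → ∀ d, m + 1 - c m ≤ d → 1 ≤ d → Ee d (seg n 1 m) ∈ I := by
    intro m
    induction m with
    | zero =>
      intro _ d _ hd1
      rw [seg_zero, Ee_empty hd1]
      exact Submodule.zero_mem _
    | succ m ihm =>
      intro hm d hgd hd1
      by_cases hex : ∃ i : Fin n, h i = m + 1
      · obtain ⟨iw, hiw⟩ := hex
        have hFne : (Finset.univ.filter fun k : Fin n => h k ≤ m + 1).Nonempty :=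
          ⟨iw, by simp [hiw]⟩
        set i0 := (Finset.univ.filter fun k : Fin n => h k ≤ m + 1).max' hFne with hi0def
        have hi0mem : h i0 ≤ m + 1 := by
          have := Finset.max'_mem _ hFne
          rw [Finset.mem_filter] at this
          exact this.2
        have hi0 : h i0 = m + 1 := by
          have hle : iw ≤ i0 := Finset.le_max' _ iw (by simp [hiw])
          have := hh2 iw i0 hle
          omega
        have hcF : c (m+1) = (i0 : ℕ) + 1 := by
          have hFeq : (Finset.univ.filter fun k : Fin n => h k ≤ m + 1)
              = Finset.univ.filter fun k : Fin n => (k : ℕ) ≤ (i0 : ℕ) := by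
            ext k
            simp only [Finset.mem_filter, Finset.mem_univ, true_and]
            constructor
            · intro hk
              exact Fin.le_def.1 (Finset.le_max' _ k (by simp [hk]))
            · intro hk
              have := hh2 k i0 (Fin.le_def.2 hk)
              omega
          rw [hc]
          simp only
          rw [hFeq, card_filter_le_val i0]
        by_cases hdm : d ≤ m + 1
        · have hi0le : (i0 : ℕ) ≤ m := by
            have := hcle (m+1)
            omega
          have hr : m + 1 - d ≤ (i0 : ℕ) := by omega
          have hmem := memIgen i0 (m + 1 - d) hr
          rw [hi0, show m + 1 - (m + 1 - d) = d by omega] at hmem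
          exact hmem
        · rw [Ee_of_card_lt (by rw [card_seg hm]; omega)]
          exact Submodule.zero_mem _
      · push_neg at hex
        have hcc : c (m+1) = c m := by
          rw [hc]
          simp only
          congr 1
          ext k
          simp only [Finset.mem_filter, Finset.mem_univ, true_and]
          have := hex k
          omega
        have hclem := hcle m
        rw [hcc] at hgd
        obtain ⟨e, rfl⟩ : ∃ e, d = e + 1 := ⟨d - 1, by omega⟩
        have hmn : m < n := by omega
        rw [seg_succ_right hmn, Ee_insert (not_mem_seg_right hmn) e]
        exact add_mem (ihm (by omega) (e+1) (by omega) (by omega))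
          (Ideal.mul_mem_left _ _ (ihm (by omega) e (by omega) (by omega)))
  apply le_antisymm
  · rw [Ideal.span_le]
    rintro p ⟨i, r, hr, rfl⟩
    have hd1 : 1 ≤ h i - r := by have := (hh1 i).1; omega
    have hcast : ((h i : ℤ) - r) = ((h i - r : ℕ) : ℤ) := by
      have := (hh1 i).1
      omega
    rw [hcast, ee_coe]
    have hstar := star2 (n := n) (h i - r) (seg n ((h i) + 1) n) Finset.univ (Finset.subset_univ _)
    rw [sdiff_seg', Finset.sum_range_succ'] at hstar
    simp only [pow_zero, Ee_zero, one_mul, Nat.sub_zero] at hstar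
    have hHU : He (h i - r) (seg n ((h i) + 1) n) ∈ J := by
      by_cases hin : h i < n
      · have hbj : β ⟨h i, hin⟩ ≤ h i - r := by
          have e1 := hβc ⟨h i, hin⟩
          simp only at e1
          have := hcge i
          have := (hh1 i).1
          omega
        have := hL1 n ⟨h i, hin⟩ (by simp) (h i - r) hbj
        exact this
      · rw [seg_empty_left (by omega), He_empty hd1]
        exact Submodule.zero_mem _
    apply neg_pow_mem J (h i - r)
    rw [← hstar]
    refine add_mem (Ideal.sum_mem _ fun k hk => Ideal.mul_mem_right _ _
      (Ideal.mul_mem_left _ _ (hEunivJ (k+1) (Nat.succ_le_succ (Nat.zero_le k))))) hHU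
  · rw [Ideal.span_le]
    rintro p ⟨j, rfl⟩
    show te n (β j) (seg n ((j : ℕ) + 1) n) ∈ (I : Set (MvPolynomial (Fin n) ℤ))
    rw [te_coe]
    have hb1 : 1 ≤ β j := by
      rw [hβc]
      have := hcle (j : ℕ)
      omega
    have hstar := star1 (n := n) (β j) (seg n 1 (j : ℕ)) Finset.univ (Finset.subset_univ _)
    rw [sdiff_seg, Finset.sum_range_succ, Nat.sub_self, He_zero, mul_one] at hstar
    rw [← hstar]
    refine add_mem (Ideal.sum_mem _ fun k hk => Ideal.mul_mem_left _ _
      (hHunivI _ (by have := Finset.mem_range.1 hk; omega)))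
      (Ideal.mul_mem_left _ _ (hL3 (j : ℕ) (by have := j.isLt; omega) (β j)
        (by rw [hβc]) hb1))
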